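/- Let X(t) be a differentiable curve of n × m real matrices of constant rank with differentiable Moore-Penrose inverse Y(t) = X(t)⁺. Then the derivative of Y satisfies Y' = −X⁺ X' X⁺ + X⁺ X⁺ᵀ (X')ᵀ (I_n − X X⁺) + (I_m − X⁺ X)(X')ᵀ X⁺ᵀ X⁺. -/

import Mathlib

open Matrix

lemma matDeriv_mul {n m p : ℕ} {A : ℝ → Matrix (Fin n) (Fin m) ℝ}
    {B : ℝ → Matrix (Fin m) (Fin p) ℝ} {A' : Matrix (Fin n) (Fin m) ℝ}
    {B' : Matrix (Fin m) (Fin p) ℝ} {t : ℝ}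
    (hA : ∀ i j, HasDerivAt (fun s => A s i j) (A' i j) t)
    (hB : ∀ i j, HasDerivAt (fun s => B s i j) (B' i j) t) :
    ∀ i j, HasDerivAt (fun s => (A s * B s) i j) ((A' * B t + A t * B') i j) t := by
  intro i j
  have h : HasDerivAt (fun s => ∑ k, A s i k * B s k j)
      (∑ k, (A' i k * B t k j + A t i k * B' k j)) t :=
    HasDerivAt.fun_sum fun k _ => (hA i k).mul (hB k j)
  simpa [Matrix.mul_apply, Matrix.add_apply, Finset.sum_add_distrib] using h

theorem deriv_moorePenrose (n m : ℕ)
    (X : ℝ → Matrix (Fin n) (Fin m) ℝ) (Y : ℝ → Matrix (Fin m) (Fin n) ℝ) (t : ℝ)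
    (X' : Matrix (Fin n) (Fin m) ℝ) (Y' : Matrix (Fin m) (Fin n) ℝ)
    (hX : ∀ i j, HasDerivAt (fun s => X s i j) (X' i j) t)
    (hY : ∀ i j, HasDerivAt (fun s => Y s i j) (Y' i j) t)
    (h1 : ∀ s, X s * Y s * X s = X s) (h2 : ∀ s, Y s * X s * Y s = Y s)
    (h3 : ∀ s, (X s * Y s)ᵀ = X s * Y s) (h4 : ∀ s, (Y s * X s)ᵀ = Y s * X s) :
    Y' = -(Y t * X' * Y t) + Y t * (Y t)ᵀ * X'ᵀ * (1 - X t * Y t)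
      + (1 - Y t * X t) * X'ᵀ * (Y t)ᵀ * Y t := by
  set A := X t with hA'
  set B := Y t with hB'
  have f1 : A * B * A = A := h1 t
  have f2 : B * A * B = B := h2 t
  have f3 : (A * B)ᵀ = A * B := h3 t
  have f4 : (B * A)ᵀ = B * A := h4 t
  -- derivative of Y X Y = Y
  have hYX := matDeriv_mul hY hX
  have hYXY := matDeriv_mul hYX hY
  have d2 : (Y' * A + B * X') * B + B * A * Y' = Y' := by
    apply Matrix.ext
    intro i j
    refine HasDerivAt.unique ?_ (hY i j)
    have h := hYXY i j
    simpa only [h2] using h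
  -- symmetry of derivative of XY
  have hXY := matDeriv_mul hX hY
  have d3 : (X' * B + A * Y')ᵀ = X' * B + A * Y' := by
    apply Matrix.ext
    intro i j
    refine HasDerivAt.unique ?_ (hXY i j)
    have h := hXY j i
    have heq : (fun s => (X s * Y s) j i) = (fun s => (X s * Y s) i j) := by
      funext s
      have := congrFun (congrFun (h3 s) i) j
      simpa [Matrix.transpose_apply] using this
    rw [heq] at h
    simpa [Matrix.transpose_apply] using h
  have d4 : (Y' * A + B * X')ᵀ = Y' * A + B * X' := by
    apply Matrix.ext
    intro i j
    refine HasDerivAt.unique ?_ (hYX i j)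
    have h := hYX j i
    have heq : (fun s => (Y s * X s) j i) = (fun s => (Y s * X s) i j) := by
      funext s
      have := congrFun (congrFun (h4 s) i) j
      simpa [Matrix.transpose_apply] using this
    rw [heq] at h
    simpa [Matrix.transpose_apply] using h
  -- generalized absorption lemmas
  have g1 : ∀ {p : ℕ} (Z : Matrix (Fin m) (Fin p) ℝ), A * (B * (A * Z)) = A * Z := by
    intro p Z
    simp only [← Matrix.mul_assoc]
    rw [f1]
  have g2 : ∀ {p : ℕ} (Z : Matrix (Fin n) (Fin p) ℝ), B * (A * (B * Z)) = B * Z := by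
    intro p Z
    simp only [← Matrix.mul_assoc]
    rw [f2]
  have g1' : A * (B * A) = A := by rw [← Matrix.mul_assoc, f1]
  have g2' : B * (A * B) = B := by rw [← Matrix.mul_assoc, f2]
  -- (III)
  have hIII : B * (A * (Y' * (A * B))) = -(B * (X' * B)) := by
    have h := congrArg (fun M => B * A * (M * (A * B))) d2
    simp only [Matrix.add_mul, Matrix.mul_add, Matrix.mul_assoc, g1, g2, g1', g2'] at h
    linear_combination (norm := abel1) h
  -- (I)
  have s1 : Y' - Y' * (A * B) = B * (X' * B) + B * (A * Y') := by
    have h := d2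
    simp only [Matrix.add_mul, Matrix.mul_assoc] at h
    linear_combination (norm := abel1) -h
  have hPP : (A * B) * (A * B) = A * B := by rw [← Matrix.mul_assoc, f1]
  have hproj : (1 - A * B) * (1 - A * B) = 1 - A * B := by
    simp only [Matrix.mul_sub, Matrix.sub_mul, Matrix.mul_one, Matrix.one_mul, hPP]
    abel
  have u1 : (1 - A * B) * (X' * B + A * Y') = (1 - A * B) * (X' * B) := by
    have z : (1 - A * B) * (A * Y') = 0 := by
      rw [← Matrix.mul_assoc, Matrix.sub_mul, Matrix.one_mul, f1, sub_self, Matrix.zero_mul]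
    rw [Matrix.mul_add, z, add_zero]
  have u2 : (X' * B + A * Y') * (1 - A * B) = (Bᵀ * X'ᵀ) * (1 - A * B) := by
    have h := congrArg Matrix.transpose u1
    simpa only [Matrix.transpose_mul, Matrix.transpose_sub, Matrix.transpose_one, f3, d3] using h
  have tI : Y' * (1 - A * B) = B * (Bᵀ * (X'ᵀ * (1 - A * B))) := by
    calc Y' * (1 - A * B) = (Y' * (1 - A * B)) * (1 - A * B) := by
          rw [Matrix.mul_assoc, hproj]
      _ = (B * (X' * B + A * Y')) * (1 - A * B) := by
          rw [show Y' * (1 - A * B) = B * (X' * B + A * Y') from by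
            rw [Matrix.mul_sub, Matrix.mul_one, Matrix.mul_add]; exact s1]
      _ = B * ((X' * B + A * Y') * (1 - A * B)) := by rw [Matrix.mul_assoc]
      _ = B * ((Bᵀ * X'ᵀ) * (1 - A * B)) := by rw [u2]
      _ = B * (Bᵀ * (X'ᵀ * (1 - A * B))) := by rw [Matrix.mul_assoc]
  -- (II)
  have s2 : Y' - B * A * Y' = (Y' * A + B * X') * B := by
    linear_combination (norm := abel1) -d2
  have hQQ : (B * A) * (B * A) = B * A := by rw [← Matrix.mul_assoc, f2]
  have hprojQ : (1 - B * A) * (1 - B * A) = 1 - B * A := by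
    simp only [Matrix.mul_sub, Matrix.sub_mul, Matrix.mul_one, Matrix.one_mul, hQQ]
    abel
  have v1 : (Y' * A + B * X') * (1 - B * A) = (B * X') * (1 - B * A) := by
    have z : (Y' * A) * (1 - B * A) = 0 := by
      rw [Matrix.mul_sub, Matrix.mul_one, Matrix.mul_assoc Y' A (B * A), g1', sub_self]
    rw [Matrix.add_mul, z, zero_add]
  have v2 : (1 - B * A) * (Y' * A + B * X') = (1 - B * A) * (X'ᵀ * Bᵀ) := by
    have h := congrArg Matrix.transpose v1
    simpa only [Matrix.transpose_mul, Matrix.transpose_sub, Matrix.transpose_one, f4, d4] using h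
  have tII : (1 - B * A) * Y' = (1 - B * A) * (X'ᵀ * (Bᵀ * B)) := by
    calc (1 - B * A) * Y' = (1 - B * A) * ((1 - B * A) * Y') := by
          rw [← Matrix.mul_assoc, hprojQ]
      _ = (1 - B * A) * ((Y' * A + B * X') * B) := by
          rw [show (1 - B * A) * Y' = (Y' * A + B * X') * B from by
            rw [Matrix.sub_mul, Matrix.one_mul]; exact s2]
      _ = ((1 - B * A) * (Y' * A + B * X')) * B := by rw [Matrix.mul_assoc]
      _ = ((1 - B * A) * (X'ᵀ * Bᵀ)) * B := by rw [v2]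
      _ = (1 - B * A) * (X'ᵀ * (Bᵀ * B)) := by rw [Matrix.mul_assoc, Matrix.mul_assoc]
  -- assembly
  have split : Y' = (B * A) * Y' + (1 - B * A) * Y' := by
    rw [Matrix.sub_mul, Matrix.one_mul]; abel
  have hsum : A * B + (1 - A * B) = 1 := by abel
  have splitQ : (B * A) * Y' = (B * A) * (Y' * (A * B)) + (B * A) * (Y' * (1 - A * B)) := by
    rw [← Matrix.mul_add, ← Matrix.mul_add, hsum, Matrix.mul_one]
  have piece1 : (B * A) * (Y' * (A * B)) = -(B * (X' * B)) := by
    rw [Matrix.mul_assoc]; exact hIII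
  have piece2 : (B * A) * (Y' * (1 - A * B)) = B * (Bᵀ * (X'ᵀ * (1 - A * B))) := by
    rw [tI, Matrix.mul_assoc, g2]
  calc Y' = B * A * Y' + (1 - B * A) * Y' := split
    _ = (B * A * (Y' * (A * B)) + B * A * (Y' * (1 - A * B)))
          + (1 - B * A) * (X'ᵀ * (Bᵀ * B)) := by rw [splitQ, tII]
    _ = (-(B * (X' * B)) + B * (Bᵀ * (X'ᵀ * (1 - A * B))))
          + (1 - B * A) * (X'ᵀ * (Bᵀ * B)) := by rw [piece1, piece2]
    _ = -(B * X' * B) + B * Bᵀ * X'ᵀ * (1 - A * B)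
          + (1 - B * A) * X'ᵀ * Bᵀ * B := by simp only [Matrix.mul_assoc]
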